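/- For every real number x > 0 and every real number A > 1, one has (e^(x/2) + A) / (e^(−x/2) + A) > e^(x/(2A)). -/

import Mathlib

open Real

lemma sinh_mul_lt (k y : ℝ) (hk : 1 < k) (hy : 0 < y) :
    k * Real.sinh y < Real.sinh (k * y) := by
  have hmono : StrictMonoOn (fun t : ℝ => Real.sinh (k * t) - k * Real.sinh t) (Set.Ici 0) := by
    apply strictMonoOn_of_deriv_pos (convex_Ici 0)
    · fun_prop
    · intro t ht
      rw [interior_Ici, Set.mem_Ioi] at ht
      have h1 : HasDerivAt (fun t : ℝ => Real.sinh (k * t) - k * Real.sinh t)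
          (Real.cosh (k * t) * k - k * Real.cosh t) t := by
        have := ((Real.hasDerivAt_sinh (k * t)).comp t
          ((hasDerivAt_id t).const_mul k)).sub ((Real.hasDerivAt_sinh t).const_mul k)
        exact this.congr_deriv (by ring)
      rw [h1.deriv]
      have hc : Real.cosh t < Real.cosh (k * t) := by
        rw [Real.cosh_lt_cosh]
        rw [abs_of_pos ht, abs_of_pos (by positivity)]
        nlinarith
      nlinarith [Real.cosh_pos t]
  have := hmono (Set.self_mem_Ici) (Set.mem_Ici.2 hy.le) hy
  simpa using this

theorem gap_exp_inequality (x A : ℝ) (hx : 0 < x) (hA : 1 < A) :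
    (Real.exp (x / 2) + A) / (Real.exp (-x / 2) + A) > Real.exp (x / (2 * A)) := by
  have hA0 : (0:ℝ) < A := by linarith
  set s := x / (2 * A) with hs
  have hs0 : 0 < s := by positivity
  have hxs : x / 2 = A * s := by rw [hs, mul_div_assoc', eq_div_iff (by positivity)]; ring
  have hkey : Real.sinh ((2 * A - 1) * (s / 2)) > A * Real.sinh (s / 2) := by
    have h1 := sinh_mul_lt (2 * A - 1) (s / 2) (by linarith) (by positivity)
    have h2 : 0 < Real.sinh (s / 2) := Real.sinh_pos_iff.2 (by positivity)
    nlinarith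
  have hmain : Real.exp s * (Real.exp (-(A * s)) + A) < Real.exp (A * s) + A := by
    have hes : 0 < Real.exp (s / 2) := Real.exp_pos _
    have E1 : Real.exp (s/2) * Real.exp ((2*A-1)*(s/2)) = Real.exp (A*s) := by
      rw [← Real.exp_add]; congr 1; ring
    have E2 : Real.exp (s/2) * Real.exp (-((2*A-1)*(s/2))) = Real.exp s * Real.exp (-(A*s)) := by
      rw [← Real.exp_add, ← Real.exp_add]; congr 1; ring
    have E3 : Real.exp (s/2) * Real.exp (s/2) = Real.exp s := by
      rw [← Real.exp_add]; congr 1; ring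
    have E4 : Real.exp (s/2) * Real.exp (-(s/2)) = 1 := by
      rw [← Real.exp_add]; simp
    rw [Real.sinh_eq, Real.sinh_eq] at hkey
    nlinarith [mul_lt_mul_of_pos_left hkey hes]
  have hpos : 0 < Real.exp (-x / 2) + A := by positivity
  rw [gt_iff_lt, lt_div_iff₀ hpos]
  have hneg : -x / 2 = -(A * s) := by rw [neg_div, hxs]
  rw [hneg, hxs]
  exact hmain
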